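/- For all reals 0 < x < y: xy + (1/3)(L(x,y) - x)(y - L(x,y)) < ((x+y)/2)^2, where L is the logarithmic mean. Hence the mean G̃(x,y) := sqrt(xy + (1/3)(L(x,y)-x)(y-L(x,y))) satisfies L(x,y) < G̃(x,y) < (x+y)/2. -/

import Mathlib

open Real MeasureTheory Set Filter

-- generic: f 1 = 0, f' > 0 on (1,∞) implies f > 0 on (1,∞)
lemma pos_of_deriv (f f' : ℝ → ℝ)
    (hd : ∀ s : ℝ, 1 ≤ s → HasDerivAt f (f' s) s)
    (h1 : f 1 = 0) (hp : ∀ s : ℝ, 1 < s → 0 < f' s) :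
    ∀ s : ℝ, 1 < s → 0 < f s := by
  intro s hs
  have hmono : StrictMonoOn f (Set.Ici 1) := by
    apply strictMonoOn_of_deriv_pos (convex_Ici 1)
    · exact fun z hz => (hd z hz).continuousAt.continuousWithinAt
    · intro z hz
      rw [interior_Ici] at hz
      rw [(hd z hz.le).deriv]
      exact hp z hz
  have := hmono Set.self_mem_Ici (Set.mem_Ici.2 hs.le) hs
  rw [h1] at this
  exact this

lemma h_pos : ∀ s : ℝ, 1 < s → 0 < s - s⁻¹ - 2 * Real.log s := by
  apply pos_of_deriv _ (fun s => (s-1)^2/s^2)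
  · intro s hs
    have hne : s ≠ 0 := by linarith
    have := ((hasDerivAt_id s).sub (hasDerivAt_inv hne)).sub
      ((Real.hasDerivAt_log hne).const_mul 2)
    convert this using 1
    · rfl
    · rfl
    · rfl
    field_simp
    ring
  · simp
  · intro s hs
    have h1 : (0:ℝ) < (s-1)^2 := pow_pos (by linarith) 2
    have h2 : (0:ℝ) < s^2 := by positivity
    positivity

lemma g2_pos : ∀ s : ℝ, 1 < s →
    0 < 2 * Real.log s - 3 + 4 * s⁻¹ - (s^2)⁻¹ := by
  apply pos_of_deriv _ (fun s => 2*(s-1)^2/s^3)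
  · intro s hs
    have hne : s ≠ 0 := by linarith
    have hne2 : s^2 ≠ 0 := pow_ne_zero 2 hne
    have := ((((Real.hasDerivAt_log hne).const_mul 2).sub_const 3).add
      ((hasDerivAt_inv hne).const_mul 4)).sub
      (((hasDerivAt_pow 2 s)).inv hne2)
    convert this using 1
    · rfl
    · rfl
    · rfl
    field_simp
    ring
  · norm_num
  · intro s hs
    have h1 : (0:ℝ) < (s-1)^2 := pow_pos (by linarith) 2
    positivity

lemma g1_pos : ∀ s : ℝ, 1 < s →
    0 < (2*s+4) * Real.log s - 5*s + 4 + s⁻¹ := by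
  apply pos_of_deriv _ (fun s => 2 * Real.log s - 3 + 4 * s⁻¹ - (s^2)⁻¹)
  · intro s hs
    have hne : s ≠ 0 := by linarith
    have := (((((hasDerivAt_id s).const_mul 2).add_const 4).mul
      (Real.hasDerivAt_log hne)).sub (((hasDerivAt_id s).const_mul 5))).add_const 4
      |>.add (hasDerivAt_inv hne)
    convert this using 1
    · rfl
    · rfl
    · rfl
    simp only [id, Pi.add_apply]
    field_simp
    ring
  · norm_num
  · exact g2_pos

lemma f2_pos : ∀ s : ℝ, 1 < s →
    0 < (s^2 + 4*s + 1) * Real.log s - 3*(s^2 - 1) := by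
  apply pos_of_deriv _ (fun s => (2*s+4) * Real.log s - 5*s + 4 + s⁻¹)
  · intro s hs
    have hne : s ≠ 0 := by linarith
    have := ((((hasDerivAt_pow 2 s).add ((hasDerivAt_id s).const_mul 4)).add_const 1).mul
      (Real.hasDerivAt_log hne)).sub
      (((hasDerivAt_pow 2 s).sub_const 1).const_mul 3)
    convert this using 1
    · rfl
    · rfl
    · rfl
    simp only [id, Pi.add_apply]
    field_simp
    ring
  · norm_num
  · exact g1_pos

lemma quad_neg (L g A : ℝ) (hg : 0 < g) (hgA : g < A) (h1 : g < L)
    (h2 : L < (2*g+A)/3) : 4*L^2 - 2*A*L - 2*g^2 < 0 := by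
  have hM : g < (2*g+A)/3 := by linarith
  nlinarith [mul_pos (mul_pos (sub_pos.2 h1) (sub_pos.2 h2)) (sub_pos.2 hM),
             mul_pos (mul_pos hg (sub_pos.2 hgA)) (sub_pos.2 h2),
             mul_pos (pow_pos (sub_pos.2 hgA) 2) (sub_pos.2 h1)]

noncomputable def uIG (a x : ℝ) : ℝ := ∫ t in Set.Ioi x, t ^ (a - 1) * Real.exp (-t)
noncomputable def Lmean (x y : ℝ) : ℝ := (y - x) / (Real.log y - Real.log x)

theorem stmt7 (x y : ℝ) (hx : 0 < x) (hxy : x < y) :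
    x * y + (1/3) * (Lmean x y - x) * (y - Lmean x y) < ((x + y)/2) ^ 2 ∧
    Lmean x y < Real.sqrt (x * y + (1/3) * (Lmean x y - x) * (y - Lmean x y)) ∧
    Real.sqrt (x * y + (1/3) * (Lmean x y - x) * (y - Lmean x y)) < (x + y)/2 := by
  have hy : 0 < y := hx.trans hxy
  have hlog : Real.log x < Real.log y := Real.log_lt_log hx hxy
  set s := Real.sqrt (y/x) with hs_def
  have hyx : 1 < y/x := (one_lt_div hx).2 hxy
  have hs1 : 1 < s := by
    rw [show (1:ℝ) = Real.sqrt 1 by simp]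
    exact Real.sqrt_lt_sqrt (by norm_num) hyx
  have hs0 : 0 < s := by linarith
  have hs2 : s^2 = y/x := Real.sq_sqrt (by positivity)
  have hxs2 : x * s^2 = y := by rw [hs2]; field_simp
  have hlog_s : Real.log y - Real.log x = 2 * Real.log s := by
    rw [← Real.log_div hy.ne' hx.ne', hs_def, Real.log_sqrt (by positivity)]; ring
  have hlogs_pos : 0 < Real.log s := by linarith
  have hL : Lmean x y = x*(s^2-1)/(2*Real.log s) := by
    rw [Lmean, hlog_s, ← hxs2]; congr 1; ring
  -- geometric mean
  have hG : x*y = (x*s)^2 := by nlinarith [hxs2]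
  have hg0 : 0 < x*s := mul_pos hx hs0
  -- lower bound: x*s < L
  have hkey1 := h_pos s hs1
  have hinv : s * s⁻¹ = 1 := mul_inv_cancel₀ hs0.ne'
  have hxinv : x*(s*s⁻¹) = x := by rw [hinv]; ring
  have hGL : x*s < Lmean x y := by
    rw [hL, lt_div_iff₀ (by positivity)]
    nlinarith [mul_lt_mul_of_pos_left (show 2*Real.log s < s - s⁻¹ by linarith) hg0, hxinv]
  -- Carlson upper bound: L < (2*(x*s) + (x+y)/2)/3
  have hkey2 := f2_pos s hs1
  have hCar : Lmean x y < (2*(x*s) + (x+y)/2)/3 := by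
    rw [hL, div_lt_div_iff₀ (by positivity) (by norm_num)]
    rw [← hxs2]
    nlinarith [mul_lt_mul_of_pos_left (show 3*(s^2-1) < (s^2+4*s+1)*Real.log s by linarith) hx]
  -- Part 1
  have p1 : x * y + (1/3) * (Lmean x y - x) * (y - Lmean x y) < ((x + y)/2) ^ 2 := by
    nlinarith [sq_nonneg (Lmean x y - (x+y)/2), mul_pos (sub_pos.2 hxy) (sub_pos.2 hxy)]
  -- Part 2
  have hAg : x*s < (x+y)/2 := by
    nlinarith [hG, mul_pos (sub_pos.2 hxy) (sub_pos.2 hxy), hg0]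
  have p2 : Lmean x y < Real.sqrt (x * y + (1/3) * (Lmean x y - x) * (y - Lmean x y)) := by
    have hL0 : 0 ≤ Lmean x y := le_of_lt (hg0.trans hGL)
    rw [show Lmean x y < Real.sqrt (x * y + (1/3) * (Lmean x y - x) * (y - Lmean x y)) ↔
        Lmean x y ^ 2 < x * y + (1/3) * (Lmean x y - x) * (y - Lmean x y) from
      Real.lt_sqrt hL0]
    have hq := quad_neg (Lmean x y) (x*s) ((x+y)/2) hg0 hAg hGL hCar
    linarith [hq, hG]
  -- Part 3
  have p3 : Real.sqrt (x * y + (1/3) * (Lmean x y - x) * (y - Lmean x y)) < (x + y)/2 :=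
    (Real.sqrt_lt' (by linarith)).2 p1
  exact ⟨p1, p2, p3⟩
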